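/- Let f be an orientation-preserving homeomorphism of the circle T = R/Z. Then the polynomial entropy h_pol(f) belongs to {0,1}, and h_pol(f) = 0 if and only if f is topologically conjugate to a rotation of T. -/

import Mathlib

open Filter Metric Set

variable {Z : Type*} [MetricSpace Z]

/-- The dynamical metric `d_n^f(x,y) = max_{0 ≤ k ≤ n-1} d(f^k x, f^k y)`. -/
noncomputable def dynDist (f : Z → Z) (n : ℕ) (x y : Z) : ℝ :=
  ((Finset.range n).sup fun k => nndist (f^[k] x) (f^[k] y) : NNReal)

/-- `G_n^f(Y,ε)`: the minimal number of balls of radius `ε` for the metric `d_n^f`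
needed to cover `Y`. -/
noncomputable def coverNum (f : Z → Z) (n : ℕ) (Y : Set Z) (ε : ℝ) : ℕ :=
  sInf {m : ℕ | ∃ s : Finset Z, s.card = m ∧
    Y ⊆ ⋃ c ∈ s, {y : Z | dynDist f n c y ≤ ε}}

/-- The polynomial entropy of `f` on `Y`:
`h_pol(f,Y) = lim_{ε→0} limsup_{n→∞} log G_n^f(Y,ε) / log n`
(realized, by antitonicity in `ε`, as the supremum over `ε > 0`). -/
noncomputable def hpolOn (f : Z → Z) (Y : Set Z) : EReal :=
  ⨆ ε : {e : ℝ // 0 < e}, Filter.atTop.limsup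
    (fun n : ℕ => ((Real.log (coverNum f n Y ε.1) / Real.log n : ℝ) : EReal))

/-- The polynomial entropy of `f`. -/
noncomputable def hpol (f : Z → Z) : EReal := hpolOn f Set.univ

/-- The circle `𝕋 = ℝ/ℤ`. -/
abbrev Circle1 : Type := AddCircle (1 : ℝ)

/-- `f` is topologically conjugate to a rotation of the circle. -/
def ConjRotCircle (f : Circle1 ≃ₜ Circle1) : Prop :=
  ∃ (h : Circle1 ≃ₜ Circle1) (a : Circle1), ∀ x : Circle1, h (f (h.symm x)) = x + a

variable {Z : Type*} [MetricSpace Z]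

lemma dynDist_le_iff {f : Z → Z} {n : ℕ} {x y : Z} {ε : ℝ} (hε : 0 ≤ ε) :
    dynDist f n x y ≤ ε ↔ ∀ k < n, dist (f^[k] x) (f^[k] y) ≤ ε := by
  rw [dynDist, ← NNReal.coe_mk ε hε, NNReal.coe_le_coe, Finset.sup_le_iff]
  simp only [Finset.mem_range]
  constructor
  · intro h k hk
    have h2 := h k hk
    rw [← NNReal.coe_le_coe] at h2
    rw [dist_nndist]
    exact_mod_cast h2
  · intro h k hk
    rw [← NNReal.coe_le_coe]
    have h2 := h k hk
    rw [dist_nndist] at h2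
    exact_mod_cast h2

lemma dist_le_dynDist {f : Z → Z} {n k : ℕ} {x y : Z} (h : k < n) :
    dist (f^[k] x) (f^[k] y) ≤ dynDist f n x y := by
  rw [dist_nndist, dynDist, NNReal.coe_le_coe]
  exact Finset.le_sup (f := fun k => nndist (f^[k] x) (f^[k] y)) (Finset.mem_range.2 h)

lemma dynDist_comm (f : Z → Z) (n : ℕ) (x y : Z) : dynDist f n x y = dynDist f n y x := by
  simp only [dynDist, nndist_comm]

lemma dynDist_triangle (f : Z → Z) (n : ℕ) (x y z : Z) :
    dynDist f n x z ≤ dynDist f n x y + dynDist f n y z := by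
  rw [dynDist, dynDist, dynDist, ← NNReal.coe_add, NNReal.coe_le_coe]
  refine Finset.sup_le fun k hk => ?_
  exact le_trans (nndist_triangle _ (f^[k] y) _)
    (add_le_add (Finset.le_sup (f := fun k => nndist (f^[k] x) (f^[k] y)) hk)
      (Finset.le_sup (f := fun k => nndist (f^[k] y) (f^[k] z)) hk))

lemma coverNum_le_card {f : Z → Z} {n : ℕ} {Y : Set Z} {ε : ℝ} (s : Finset Z)
    (h : Y ⊆ ⋃ c ∈ s, {y : Z | dynDist f n c y ≤ ε}) : coverNum f n Y ε ≤ s.card :=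
  Nat.sInf_le ⟨s, rfl, h⟩

lemma le_coverNum {f : Z → Z} {n N : ℕ} {Y : Set Z} {ε : ℝ}
    (hex : ∃ s : Finset Z, Y ⊆ ⋃ c ∈ s, {y : Z | dynDist f n c y ≤ ε})
    (h : ∀ s : Finset Z, (Y ⊆ ⋃ c ∈ s, {y : Z | dynDist f n c y ≤ ε}) → N ≤ s.card) :
    N ≤ coverNum f n Y ε := by
  obtain ⟨s₀, hs₀⟩ := hex
  have hne : {m : ℕ | ∃ s : Finset Z, s.card = m ∧
      Y ⊆ ⋃ c ∈ s, {y : Z | dynDist f n c y ≤ ε}}.Nonempty := ⟨s₀.card, s₀, rfl, hs₀⟩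
  obtain ⟨s, hcard, hs⟩ := Nat.sInf_mem hne
  rw [coverNum, ← hcard]
  exact h s hs

/-- separated points force many covering sets -/
lemma le_coverNum_of_separated {f : Z → Z} {n N : ℕ} {ε δ : ℝ} (hδ : 2 * ε < δ)
    (p : Fin N → Z) (hsep : ∀ i j, i ≠ j → δ ≤ dynDist f n (p i) (p j))
    (hex : ∃ s : Finset Z, (univ : Set Z) ⊆ ⋃ c ∈ s, {y : Z | dynDist f n c y ≤ ε}) :
    N ≤ coverNum f n univ ε := by
  refine le_coverNum hex fun s hs => ?_
  have hc : ∀ i : Fin N, ∃ c ∈ s, dynDist f n c (p i) ≤ ε := by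
    intro i
    have := hs (mem_univ (p i))
    simp only [mem_iUnion, mem_setOf_eq] at this
    obtain ⟨c, hcs, hc⟩ := this
    exact ⟨c, hcs, hc⟩
  choose c hcs hcd using hc
  have hinj : Function.Injective c := by
    intro i j hij
    by_contra hne
    have h1 := hsep i j (fun h => hne (by rw [h]))
    have h2 : dynDist f n (p i) (p j) ≤ 2 * ε := by
      calc dynDist f n (p i) (p j) ≤ dynDist f n (p i) (c i) + dynDist f n (c i) (p j) :=
            dynDist_triangle f n _ _ _
        _ ≤ ε + ε := by
            rw [dynDist_comm f n (p i) (c i)]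
            exact add_le_add (hcd i) (hij ▸ hcd j)
        _ = 2 * ε := by ring
    linarith
  calc N = (Finset.univ : Finset (Fin N)).card := by simp
    _ ≤ s.card := Finset.card_le_card_of_injOn c (fun i _ => hcs i) fun i _ j _ h => hinj h


lemma circle_coe_sub (a b : ℝ) :
    ((a : ℝ) : Circle1) - ((b : ℝ) : Circle1) = (((a - b : ℝ)) : Circle1) := by
  rw [← QuotientAddGroup.mk_sub]

lemma circle_dist_eq (a b : ℝ) :
    dist ((a : ℝ) : Circle1) ((b : ℝ) : Circle1) = |a - b - round (a - b)| := by
  rw [dist_eq_norm, circle_coe_sub, AddCircle.norm_eq]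
  simp

lemma circle_dist_le (a b : ℝ) : dist ((a : ℝ) : Circle1) ((b : ℝ) : Circle1) ≤ |a - b| := by
  rw [circle_dist_eq]
  have := abs_sub_round_eq_min (a - b)
  calc |a - b - round (a-b)| = |a-b-round (a-b)| := rfl
    _ ≤ |a - b - 0| := by
        have : |a - b - ↑(round (a - b))| ≤ |a - b - (0:ℤ)| := round_le (a-b) 0
        simpa using this
    _ = |a - b| := by ring_nf

lemma circle_dist_lt {a b : ℝ} {r : ℝ} (h : dist ((a : ℝ) : Circle1) ((b : ℝ) : Circle1) < r) :
    ∃ k : ℤ, |a - b - k| < r := by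
  rw [circle_dist_eq] at h
  exact ⟨round (a - b), h⟩

lemma circle_coe_eq_coe_iff {a b : ℝ} :
    ((a : ℝ) : Circle1) = ((b : ℝ) : Circle1) ↔ ∃ k : ℤ, a = b + k := by
  rw [QuotientAddGroup.eq_iff_sub_mem]
  constructor
  · rintro h
    rw [AddSubgroup.mem_zmultiples_iff] at h
    obtain ⟨k, hk⟩ := h
    exact ⟨k, by rw [← sub_eq_iff_eq_add']; simpa [zsmul_eq_mul] using hk.symm⟩
  · rintro ⟨k, rfl⟩
    rw [AddSubgroup.mem_zmultiples_iff]
    exact ⟨k, by simp [zsmul_eq_mul]⟩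


section Lift
variable (f : Circle1 ≃ₜ Circle1) (F : ℝ → ℝ)

/-- an integer-valued continuous function is constant -/
lemma int_valued_const {φ : ℝ → ℝ} (hc : Continuous φ) (hint : ∀ x, ∃ k : ℤ, φ x = k)
    (x y : ℝ) : φ x = φ y := by
  by_contra hne
  obtain ⟨kx, hkx⟩ := hint x
  obtain ⟨ky, hky⟩ := hint y
  wlog hlt : φ x < φ y generalizing x y kx ky
  · exact this y x (Ne.symm hne) ky hky kx hkx
      (lt_of_le_of_ne (not_lt.1 hlt) (fun h => hne h.symm))
  have hk : (kx : ℝ) < ky := by rw [← hkx, ← hky]; exact hlt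
  have hkk : kx < ky := by exact_mod_cast hk
  have hmid : φ x ≤ (kx : ℝ) + 1/2 ∧ ((kx : ℝ) + 1/2) ≤ φ y := by
    constructor
    · rw [hkx]; linarith
    · rw [hky]
      have : (kx : ℝ) + 1 ≤ ky := by exact_mod_cast hkk
      linarith
  rcases le_total x y with hxy | hxy
  · obtain ⟨z, _, hz⟩ := intermediate_value_Icc hxy hc.continuousOn ⟨hmid.1, hmid.2⟩
    obtain ⟨kz, hkz⟩ := hint z
    rw [hkz] at hz
    have : (2*kz : ℤ) = 2*kx + 1 := by
      have h2 : (2*(kz:ℝ)) = 2*kx + 1 := by push_cast; linarith [hz]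
      exact_mod_cast h2
    omega
  · obtain ⟨z, _, hz⟩ := intermediate_value_Icc' hxy hc.continuousOn ⟨hmid.1, hmid.2⟩
    obtain ⟨kz, hkz⟩ := hint z
    rw [hkz] at hz
    have : (2*kz : ℤ) = 2*kx + 1 := by
      have h2 : (2*(kz:ℝ)) = 2*kx + 1 := by push_cast; linarith [hz]
      exact_mod_cast h2
    omega

variable (hFcont : Continuous F) (hFmono : StrictMono F)
  (hFlift : ∀ x : ℝ, f ((x : ℝ) : Circle1) = ((F x : ℝ) : Circle1))

include hFcont hFmono hFlift in
lemma lift_add_one : ∀ x : ℝ, F (x + 1) = F x + 1 := by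
  have hint : ∀ x, ∃ k : ℤ, F (x + 1) - F x = k := by
    intro x
    have h1 : ((x + 1 : ℝ) : Circle1) = ((x : ℝ) : Circle1) :=
      circle_coe_eq_coe_iff.2 ⟨1, by push_cast; ring⟩
    have h2 : ((F (x+1) : ℝ) : Circle1) = ((F x : ℝ) : Circle1) := by
      rw [← hFlift, ← hFlift, h1]
    obtain ⟨k, hk⟩ := circle_coe_eq_coe_iff.1 h2
    exact ⟨k, by linarith⟩
  have hconst : ∀ x, F (x + 1) - F x = F (0 + 1) - F 0 :=
    fun x => int_valued_const (by continuity) hint x 0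
  obtain ⟨k, hk⟩ := hint 0
  have hkpos : (1 : ℝ) ≤ k := by
    have : (0 : ℝ) < k := by
      rw [← hk]
      simpa using sub_pos.2 (hFmono (by norm_num : (0:ℝ) < 0 + 1))
    exact_mod_cast (by exact_mod_cast this : (0:ℤ) < k)
  have hk1 : (k : ℝ) = 1 := by
    by_contra hne
    have hk2 : (2 : ℝ) ≤ k := by
      have : (1:ℤ) < k := lt_of_le_of_ne (by exact_mod_cast hkpos)
        (by intro h; exact hne (by rw [← h]; norm_num))
      exact_mod_cast this
    -- find z in (0,1) with F z = F 0 + 1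
    have h01 : (0:ℝ) ≤ 1 := by norm_num
    have hF1 : F 1 = F 0 + k := by have := hk; simp at this ⊢; linarith
    have hmem : F 0 + 1 ∈ Icc (F 0) (F 1) := by
      constructor <;> [linarith; rw [hF1]] <;> linarith
    obtain ⟨z, hz01, hz⟩ := intermediate_value_Icc h01 hFcont.continuousOn hmem
    have hz0 : z ≠ 0 := fun h => by rw [h] at hz; linarith
    have hz1 : z ≠ 1 := fun h => by rw [h, hF1] at hz; linarith
    have : f ((z : ℝ) : Circle1) = f ((0 : ℝ) : Circle1) := by
      rw [hFlift, hFlift, hz]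
      exact circle_coe_eq_coe_iff.2 ⟨1, by push_cast; ring⟩
    have hzeq : ((z : ℝ) : Circle1) = ((0 : ℝ) : Circle1) := f.injective this
    obtain ⟨m, hm⟩ := circle_coe_eq_coe_iff.1 hzeq
    have hm0 : z = (m : ℝ) := by linarith
    have : 0 < z := lt_of_le_of_ne hz01.1 (Ne.symm hz0)
    have : z < 1 := lt_of_le_of_ne hz01.2 hz1
    have h0m : (0:ℤ) < m := by exact_mod_cast hm0 ▸ ‹0 < z›
    have h1m : (m:ℤ) < 1 := by exact_mod_cast hm0 ▸ ‹z < 1›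
    omega
  intro x
  have := hconst x
  rw [hk] at this
  rw [hk1] at this
  linarith

include hFlift in
lemma lift_iterate : ∀ (k : ℕ) (x : ℝ), (⇑f)^[k] ((x : ℝ) : Circle1) = ((F^[k] x : ℝ) : Circle1) := by
  intro k
  induction k with
  | zero => intro x; simp
  | succ k ih =>
    intro x
    rw [Function.iterate_succ_apply', Function.iterate_succ_apply', ih, hFlift]

/-- surjectivity of a continuous degree-one map -/
lemma surj_of_deg_one {H : ℝ → ℝ} (hc : Continuous H) (h1 : ∀ x, H (x + 1) = H x + 1) :
    Function.Surjective H := by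
  have hn : ∀ (n : ℕ) (x : ℝ), H (x + n) = H x + n := by
    intro n
    induction n with
    | zero => simp
    | succ n ih => intro x; push_cast; rw [← add_assoc, h1, ih]; ring
  intro y
  obtain ⟨n, hny⟩ := exists_nat_gt (|y - H 0|) 
  have h1' : H (0 - n) = H 0 - n := by
    have := hn n (0 - n); rw [sub_add_cancel] at this; linarith
  have h2' : H (0 + n) = H 0 + n := hn n 0
  have habs := abs_lt.1 hny
  have hmem : y ∈ Icc (H (0 - n)) (H (0 + n)) := by
    rw [h1', h2']; constructor <;> linarith
  obtain ⟨z, _, hz⟩ := intermediate_value_Icc (by linarith [habs.1, habs.2] : (0:ℝ) - n ≤ 0 + n)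
    hc.continuousOn hmem
  exact ⟨z, hz⟩

end Lift

lemma continuous_iterate {F : ℝ → ℝ} (h : Continuous F) (k : ℕ) : Continuous (F^[k]) := by
  induction k with
  | zero => simpa using continuous_id
  | succ k ih => rw [Function.iterate_succ]; exact ih.comp h

section Cover
variable {f : Circle1 ≃ₜ Circle1} {F : ℝ → ℝ}
variable (hFcont : Continuous F) (hFmono : StrictMono F) (hF1 : ∀ x : ℝ, F (x + 1) = F x + 1)
  (hFliftIt : ∀ (k : ℕ) (x : ℝ), (⇑f)^[k] ((x : ℝ) : Circle1) = ((F^[k] x : ℝ) : Circle1))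

include hF1 in
lemma iter_add_one (k : ℕ) (x : ℝ) : F^[k] (x + 1) = F^[k] x + 1 := by
  induction k with
  | zero => simp
  | succ k ih => rw [Function.iterate_succ_apply', Function.iterate_succ_apply', ih, hF1]

include hFcont hFmono hF1 hFliftIt in
lemma cover_exists (n : ℕ) (hn : 1 ≤ n) {ε : ℝ} (hε : 0 < ε) :
    ∃ s : Finset Circle1, s.card ≤ ⌈(n : ℝ) / ε⌉₊ + 1 ∧
      (univ : Set Circle1) ⊆ ⋃ c ∈ s, {y : Circle1 | dynDist (⇑f) n c y ≤ ε} := by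
  classical
  set M := ⌈(n : ℝ) / ε⌉₊ with hM
  have hMpos : 0 < M := Nat.ceil_pos.2 (by positivity)
  have hMR : (0:ℝ) < M := by exact_mod_cast hMpos
  have hMε : (n : ℝ) / M ≤ ε := by
    rw [div_le_iff₀ hMR]
    calc (n : ℝ) = ((n : ℝ) / ε) * ε := by field_simp
      _ ≤ (M : ℝ) * ε := mul_le_mul_of_nonneg_right (Nat.le_ceil _) hε.le
      _ = ε * M := mul_comm _ _
  set S : ℝ → ℝ := fun x => ∑ k ∈ Finset.range n, (F^[k] x - F^[k] 0) with hSdef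
  have hFkmono : ∀ k : ℕ, Monotone (F^[k]) := fun k => (hFmono.monotone).iterate k
  have hSmono : StrictMono S := by
    intro x y hxy
    apply Finset.sum_lt_sum
    · intro k _; exact sub_le_sub_right (hFkmono k hxy.le) _
    · exact ⟨0, Finset.mem_range.2 hn, by simpa using sub_lt_sub_right hxy (F^[0] 0)⟩
  have hScont : Continuous S :=
    continuous_finset_sum _ fun k _ => (continuous_iterate hFcont k).sub continuous_const
  have hS0 : S 0 = 0 := by simp [hSdef]
  have hS1 : S 1 = n := by
    have : ∀ k : ℕ, F^[k] (1:ℝ) = F^[k] 0 + 1 := by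
      intro k
      have := iter_add_one hF1 k 0
      simpa using this
    simp only [hSdef, this]
    rw [Finset.sum_sub_distrib, Finset.sum_add_distrib]
    simp
  -- choose the points x j
  have hxex : ∀ j : ℕ, ∃ x ∈ Icc (0:ℝ) 1, S x = (min j M : ℕ) * ((n:ℝ)/M) := by
    intro j
    have hjM : ((min j M : ℕ) : ℝ) ≤ M := by exact_mod_cast Nat.cast_le.2 (min_le_right j M)
    have htn : ((min j M : ℕ) : ℝ) * ((n:ℝ)/M) ≤ n := by
      calc ((min j M : ℕ) : ℝ) * ((n:ℝ)/M) ≤ (M:ℝ) * ((n:ℝ)/M) :=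
            mul_le_mul_of_nonneg_right hjM (by positivity)
        _ = n := by field_simp
    have ht0 : 0 ≤ ((min j M : ℕ) : ℝ) * ((n:ℝ)/M) := by positivity
    have hmem : ((min j M : ℕ) : ℝ) * ((n:ℝ)/M) ∈ Icc (S 0) (S 1) := by
      rw [hS0, hS1]; exact ⟨ht0, htn⟩
    obtain ⟨x, hx, hSx⟩ := intermediate_value_Icc (by norm_num : (0:ℝ) ≤ 1)
      hScont.continuousOn hmem
    exact ⟨x, hx, hSx⟩
  choose x hxmem hxval using hxex
  have hxmono : ∀ {j j' : ℕ}, j ≤ j' → x j ≤ x j' := by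
    intro j j' hj
    have : S (x j) ≤ S (x j') := by
      rw [hxval, hxval]
      apply mul_le_mul_of_nonneg_right _ (by positivity)
      exact_mod_cast Nat.cast_le.2 (min_le_min_right M hj)
    exact (hSmono.le_iff_le).1 this
  have hx0 : x 0 = 0 := by
    have : S (x 0) = S 0 := by rw [hxval, hS0]; simp
    exact hSmono.injective this
  have hxM : x M = 1 := by
    have : S (x M) = S 1 := by
      rw [hxval, hS1]
      rw [min_self]
      field_simp
    exact hSmono.injective this
  -- gap bound
  have hgap : ∀ j : ℕ, j < M → ∀ k < n, F^[k] (x (j+1)) - F^[k] (x j) ≤ ε := by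
    intro j hj k hk
    have hsum : ∑ i ∈ Finset.range n, (F^[i] (x (j+1)) - F^[i] (x j)) = (n:ℝ)/M := by
      have : S (x (j+1)) - S (x j) = (n:ℝ)/M := by
        rw [hxval, hxval]
        have h1 : min (j+1) M = j+1 := min_eq_left (by omega)
        have h2 : min j M = j := min_eq_left (by omega)
        rw [h1, h2]
        push_cast
        ring
      have key : ∑ i ∈ Finset.range n, (F^[i] (x (j+1)) - F^[i] (x j))
          = S (x (j+1)) - S (x j) := by
        simp only [hSdef]
        rw [← Finset.sum_sub_distrib]
        exact Finset.sum_congr rfl fun i _ => by ring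
      rw [key, this]
    have hterm : F^[k] (x (j+1)) - F^[k] (x j) ≤ ∑ i ∈ Finset.range n, (F^[i] (x (j+1)) - F^[i] (x j)) := by
      apply Finset.single_le_sum (f := fun i => F^[i] (x (j+1)) - F^[i] (x j))
        (fun i _ => sub_nonneg.2 (hFkmono i (hxmono (Nat.le_succ j)))) (Finset.mem_range.2 hk)
    calc F^[k] (x (j+1)) - F^[k] (x j) ≤ (n:ℝ)/M := hsum ▸ hterm
      _ ≤ ε := hMε
  refine ⟨(Finset.range (M+1)).image (fun j => ((x j : ℝ) : Circle1)), ?_, ?_⟩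
  · calc ((Finset.range (M+1)).image fun j => ((x j : ℝ) : Circle1)).card
        ≤ (Finset.range (M+1)).card := Finset.card_image_le
      _ = M + 1 := Finset.card_range _
  · intro y _
    induction y using QuotientAddGroup.induction_on with
    | H z =>
    set t := Int.fract z with ht
    have hty : ((t : ℝ) : Circle1) = ((z : ℝ) : Circle1) :=
      circle_coe_eq_coe_iff.2 ⟨-⌊z⌋, by rw [ht, Int.fract]; push_cast; ring⟩
    have ht01 : 0 ≤ t ∧ t < 1 := ⟨Int.fract_nonneg z, Int.fract_lt_one z⟩
    set P : ℕ → Prop := fun j => x j ≤ t with hP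
    have hP0 : P 0 := by rw [hP]; simp [hx0, ht01.1]
    set j₀ := Nat.findGreatest P M with hj₀
    have hPj₀ : P j₀ := Nat.findGreatest_spec (Nat.zero_le M) hP0
    have hj₀M : j₀ ≤ M := Nat.findGreatest_le M
    have hj₀lt : j₀ < M := by
      rcases lt_or_eq_of_le hj₀M with h | h
      · exact h
      · exfalso
        have : x M ≤ t := by rw [← h]; exact hPj₀
        rw [hxM] at this
        linarith [ht01.2]
    have hnotP : ¬ P (j₀ + 1) := Nat.findGreatest_is_greatest (Nat.lt_succ_self j₀) (by omega)
    have htup : t ≤ x (j₀ + 1) := le_of_not_ge hnotP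
    simp only [mem_iUnion, Finset.mem_image, mem_setOf_eq]
    refine ⟨((x j₀ : ℝ) : Circle1), ⟨⟨j₀, Finset.mem_range.2 (by omega), rfl⟩, ?_⟩⟩
    rw [← hty]
    rw [dynDist_le_iff hε.le]
    intro k hk
    rw [hFliftIt k, hFliftIt k]
    calc dist ((F^[k] (x j₀) : ℝ) : Circle1) ((F^[k] t : ℝ) : Circle1) ≤ |F^[k] (x j₀) - F^[k] t| :=
          circle_dist_le _ _
      _ ≤ ε := by
          rw [abs_sub_comm, abs_of_nonneg (sub_nonneg.2 (hFkmono k hPj₀))]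
          have := hgap j₀ hj₀lt k hk
          have h2 : F^[k] t ≤ F^[k] (x (j₀+1)) := hFkmono k htup
          linarith

include hFcont hFmono hF1 hFliftIt in
lemma coverNum_le_bound (n : ℕ) (hn : 1 ≤ n) {ε : ℝ} (hε : 0 < ε) :
    coverNum (⇑f) n univ ε ≤ ⌈(n : ℝ) / ε⌉₊ + 1 := by
  obtain ⟨s, hcard, hcov⟩ := cover_exists hFcont hFmono hF1 hFliftIt n hn hε
  exact le_trans (coverNum_le_card s hcov) hcard

end Cover


lemma log_nat_tendsto : Tendsto (fun n : ℕ => Real.log n) atTop atTop :=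
  Real.tendsto_log_atTop.comp tendsto_natCast_atTop_atTop

lemma inv_log_tendsto : Tendsto (fun n : ℕ => (Real.log n)⁻¹) atTop (nhds 0) :=
  log_nat_tendsto.inv_tendsto_atTop

lemma limsup_coe_le_one {u : ℕ → ℕ} (C : ℝ) (hC : 1 ≤ C)
    (h : ∀ n : ℕ, 1 ≤ n → (u n : ℝ) ≤ C * n) :
    Filter.atTop.limsup
      (fun n : ℕ => ((Real.log (u n) / Real.log n : ℝ) : EReal)) ≤ 1 := by
  set v : ℕ → ℝ := fun n => 1 + Real.log C * (Real.log n)⁻¹ with hv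
  have hvt : Tendsto v atTop (nhds 1) := by
    have := (tendsto_const_nhds (x := Real.log C)).mul inv_log_tendsto
    rw [mul_zero] at this
    have h2 := (tendsto_const_nhds (x := (1:ℝ))).add this
    rw [add_zero] at h2
    exact h2
  have hvE : Tendsto (fun n : ℕ => ((v n : ℝ) : EReal)) atTop (nhds ((1:ℝ) : EReal)) :=
    (EReal.tendsto_coe).2 hvt
  have hlim : Filter.atTop.limsup (fun n : ℕ => ((v n : ℝ) : EReal)) = ((1:ℝ) : EReal) :=
    hvE.limsup_eq
  have hle : ∀ᶠ n : ℕ in atTop,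
      ((Real.log (u n) / Real.log n : ℝ) : EReal) ≤ ((v n : ℝ) : EReal) := by
    filter_upwards [eventually_ge_atTop 2] with n hn
    rw [EReal.coe_le_coe_iff]
    have hlogn : 0 < Real.log n := Real.log_pos (by exact_mod_cast hn)
    have hlogu : Real.log (u n) ≤ Real.log C + Real.log n := by
      rcases Nat.eq_zero_or_pos (u n) with h0 | hpos
      · rw [h0]
        simp only [Nat.cast_zero, Real.log_zero]
        have := Real.log_nonneg hC
        linarith
      · have h1 : (u n : ℝ) ≤ C * n := h n (by omega)
        calc Real.log (u n) ≤ Real.log (C * n) :=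
              Real.log_le_log (by exact_mod_cast hpos) h1
          _ = Real.log C + Real.log n := Real.log_mul (by linarith) (by positivity)
    calc Real.log (u n) / Real.log n ≤ (Real.log C + Real.log n) / Real.log n := by
          apply div_le_div_of_nonneg_right hlogu hlogn.le
      _ = v n := by simp only [hv]; rw [add_div, div_self hlogn.ne']; ring
  calc Filter.atTop.limsup (fun n : ℕ => ((Real.log (u n) / Real.log n : ℝ) : EReal))
      ≤ Filter.atTop.limsup (fun n : ℕ => ((v n : ℝ) : EReal)) := limsup_le_limsup hle
    _ = ((1:ℝ) : EReal) := hlim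
    _ = 1 := by norm_num

lemma one_le_limsup_coe {u : ℕ → ℕ} (h : ∀ n : ℕ, 1 ≤ n → n ≤ u n) :
    (1 : EReal) ≤ Filter.atTop.limsup
      (fun n : ℕ => ((Real.log (u n) / Real.log n : ℝ) : EReal)) := by
  have hle : ∀ᶠ n : ℕ in atTop,
      ((1:ℝ) : EReal) ≤ ((Real.log (u n) / Real.log n : ℝ) : EReal) := by
    filter_upwards [eventually_ge_atTop 2] with n hn
    rw [EReal.coe_le_coe_iff]
    have hlogn : 0 < Real.log n := Real.log_pos (by exact_mod_cast hn)
    have : Real.log n ≤ Real.log (u n) :=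
      Real.log_le_log (by positivity) (by exact_mod_cast h n (by omega))
    rw [le_div_iff₀ hlogn]
    linarith
  calc (1 : EReal) = Filter.atTop.limsup (fun _ : ℕ => ((1:ℝ) : EReal)) := by
        rw [limsup_const]; norm_num
    _ ≤ _ := limsup_le_limsup hle

lemma limsup_coe_eq_zero {u : ℕ → ℕ} (K : ℝ) (h1 : ∀ n : ℕ, 1 ≤ (u n)) (hK : ∀ n : ℕ, (u n : ℝ) ≤ K) :
    Filter.atTop.limsup
      (fun n : ℕ => ((Real.log (u n) / Real.log n : ℝ) : EReal)) = 0 := by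
  have hKpos : (1:ℝ) ≤ K := le_trans (by exact_mod_cast h1 0) (hK 0)
  have ht : Tendsto (fun n : ℕ => Real.log (u n) / Real.log n) atTop (nhds 0) := by
    apply squeeze_zero' (g := fun n : ℕ => Real.log K * (Real.log n)⁻¹)
    · filter_upwards [eventually_ge_atTop 2] with n hn
      have hlogn : 0 < Real.log n := Real.log_pos (by exact_mod_cast hn)
      positivity
    · filter_upwards [eventually_ge_atTop 2] with n hn
      have hlogn : 0 < Real.log n := Real.log_pos (by exact_mod_cast hn)
      rw [div_eq_mul_inv]
      apply mul_le_mul_of_nonneg_right _ (by positivity)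
      exact Real.log_le_log (by exact_mod_cast h1 n) (hK n)
    · have := (tendsto_const_nhds (x := Real.log K)).mul inv_log_tendsto
      rwa [mul_zero] at this
  have : Tendsto (fun n : ℕ => ((Real.log (u n) / Real.log n : ℝ) : EReal)) atTop
      (nhds ((0:ℝ) : EReal)) := (EReal.tendsto_coe).2 ht
  rw [this.limsup_eq]
  norm_num

lemma iter_symm (f : Circle1 ≃ₜ Circle1) : ∀ (i j : ℕ), i ≤ j → ∀ x : Circle1,
    (⇑f)^[i] ((⇑f.symm)^[j] x) = (⇑f.symm)^[j-i] x := by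
  intro i
  induction i with
  | zero => intro j _ x; simp
  | succ i ih =>
    intro j hij x
    rw [Function.iterate_succ_apply', ih j (by omega) x]
    have h2 : j - i = (j - (i+1)) + 1 := by omega
    rw [h2, Function.iterate_succ_apply']
    simp

section Hpol
variable {f : Circle1 ≃ₜ Circle1} {F : ℝ → ℝ}
variable (hFcont : Continuous F) (hFmono : StrictMono F) (hF1 : ∀ x : ℝ, F (x + 1) = F x + 1)
  (hFliftIt : ∀ (k : ℕ) (x : ℝ), (⇑f)^[k] ((x : ℝ) : Circle1) = ((F^[k] x : ℝ) : Circle1))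

include hFcont hFmono hF1 hFliftIt in
lemma hpol_le_one_of_lift : hpol (⇑f) ≤ 1 := by
  rw [hpol, hpolOn]
  apply iSup_le
  rintro ⟨ε, hε⟩
  apply limsup_coe_le_one (1/ε + 2) (by have := one_div_pos.2 hε; linarith)
  intro n hn
  have hb := coverNum_le_bound hFcont hFmono hF1 hFliftIt n hn hε
  have h1 : (⌈(n:ℝ)/ε⌉₊ : ℝ) < (n:ℝ)/ε + 1 := Nat.ceil_lt_add_one (by positivity)
  have h2 : (1:ℝ) ≤ n := by exact_mod_cast hn
  calc (coverNum (⇑f) n univ ε : ℝ) ≤ (⌈(n:ℝ)/ε⌉₊ + 1 : ℕ) := by exact_mod_cast hb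
    _ ≤ (n:ℝ)/ε + 2 := by push_cast; linarith
    _ ≤ (1/ε + 2) * n := by
        rw [add_mul]
        have : (n:ℝ)/ε = (1/ε) * n := by ring
        nlinarith [one_div_pos.2 hε]

include hFcont hFmono hF1 hFliftIt in
lemma coverNum_pos_etc (n : ℕ) (hn : 1 ≤ n) {ε : ℝ} (hε : 0 < ε)
    (hkey : ∃ c : Circle1, ∃ δ : ℝ, 0 < δ ∧ (3*ε ≤ δ) ∧
      ∀ m : ℕ, 1 ≤ m → δ ≤ dist ((⇑f.symm)^[m] c) c) :
    n ≤ coverNum (⇑f) n univ ε := by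
  obtain ⟨c, δ, hδ, hεδ, hfar⟩ := hkey
  obtain ⟨s, _, hcov⟩ := cover_exists hFcont hFmono hF1 hFliftIt n hn hε
  apply le_coverNum_of_separated (δ := δ) (by linarith) (fun k : Fin n => (⇑f.symm)^[(k:ℕ)] c)
  · intro i j hij
    have hne : (i:ℕ) ≠ (j:ℕ) := fun hh => hij (Fin.ext hh)
    wlog hlt : (i:ℕ) < (j:ℕ) generalizing i j
    · rw [dynDist_comm]
      exact this j i (Ne.symm hij) (fun hh => hij (Fin.ext hh.symm)) (by omega)
    calc δ ≤ dist ((⇑f.symm)^[(j:ℕ)-(i:ℕ)] c) c := hfar _ (by omega)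
      _ = dist ((⇑f)^[(i:ℕ)] ((⇑f.symm)^[(i:ℕ)] c)) ((⇑f)^[(i:ℕ)] ((⇑f.symm)^[(j:ℕ)] c)) := by
          rw [iter_symm f i i le_rfl, iter_symm f i j hlt.le]
          simp [dist_comm]
      _ ≤ dynDist (⇑f) n ((⇑f.symm)^[(i:ℕ)] c) ((⇑f.symm)^[(j:ℕ)] c) :=
          dist_le_dynDist i.isLt
  · exact ⟨s, hcov⟩

include hFcont hFmono hF1 hFliftIt in
lemma hpol_eq_one_of_key
    (hkey : ∃ c : Circle1, ∃ δ : ℝ, 0 < δ ∧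
      ∀ m : ℕ, 1 ≤ m → δ ≤ dist ((⇑f.symm)^[m] c) c) :
    hpol (⇑f) = 1 := by
  obtain ⟨c, δ, hδ, hfar⟩ := hkey
  apply le_antisymm (hpol_le_one_of_lift hFcont hFmono hF1 hFliftIt)
  rw [hpol, hpolOn]
  apply le_iSup_of_le ⟨δ/3, by positivity⟩
  apply one_le_limsup_coe
  intro n hn
  exact coverNum_pos_etc hFcont hFmono hF1 hFliftIt n hn (by positivity)
    ⟨c, δ, hδ, by linarith, hfar⟩

end Hpol

lemma hpol_eq_zero_of_conj {f : Circle1 ≃ₜ Circle1} (hconj : ConjRotCircle f) :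
    hpol (⇑f) = 0 := by
  haveI : Fact ((0:ℝ) < 1) := ⟨one_pos⟩
  obtain ⟨h, a, hcj⟩ := hconj
  have hf : ∀ y : Circle1, f y = h.symm (h y + a) := by
    intro y
    have := hcj (h y)
    rw [Homeomorph.symm_apply_apply] at this
    rw [← this, Homeomorph.symm_apply_apply]
  have hfk : ∀ (k : ℕ) (y : Circle1), (⇑f)^[k] y = h.symm (h y + k • a) := by
    intro k
    induction k with
    | zero => intro y; simp
    | succ k ih =>
      intro y
      rw [Function.iterate_succ_apply', ih, hf, Homeomorph.apply_symm_apply, succ_nsmul, add_assoc]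
  rw [hpol, hpolOn]
  have hzero : ∀ ε : {e : ℝ // 0 < e}, Filter.atTop.limsup
      (fun n : ℕ => ((Real.log (coverNum (⇑f) n univ ε.1) / Real.log n : ℝ) : EReal)) = 0 := by
    rintro ⟨ε, hε⟩
    have huc : UniformContinuous ⇑h.symm :=
      CompactSpace.uniformContinuous_of_continuous h.symm.continuous
    obtain ⟨δ', hδ', hδimp⟩ := Metric.uniformContinuous_iff.1 huc ε hε
    set δ := δ'/2 with hddef
    have hδpos : 0 < δ := by positivity
    set N := ⌈1/δ⌉₊ + 1 with hN
    have hnet : ∀ y : Circle1, ∃ j : ℕ, j < N ∧ dist (((j*δ : ℝ) : Circle1)) y ≤ δ := by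
      intro y
      induction y using QuotientAddGroup.induction_on with
      | H z =>
      set t := Int.fract z with ht
      have hty : ((t : ℝ) : Circle1) = ((z : ℝ) : Circle1) :=
        circle_coe_eq_coe_iff.2 ⟨-⌊z⌋, by rw [ht, Int.fract]; push_cast; ring⟩
      have ht0 : 0 ≤ t := Int.fract_nonneg z
      have ht1 : t < 1 := Int.fract_lt_one z
      set j := ⌊t/δ⌋₊ with hj
      have hjt : (j:ℝ) ≤ t/δ := Nat.floor_le (by positivity)
      have hjlt : (j:ℝ) < 1/δ := lt_of_le_of_lt hjt
        (by rw [div_lt_div_iff₀ hδpos hδpos]; nlinarith)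
      have hjN : j < N := by
        have h1 : (j:ℝ) < (N:ℝ) := by
          rw [hN]
          push_cast
          linarith [Nat.le_ceil (1/δ)]
        exact_mod_cast h1
      refine ⟨j, hjN, ?_⟩
      rw [← hty]
      calc dist (((j*δ : ℝ) : Circle1)) ((t : ℝ) : Circle1) ≤ |(j:ℝ)*δ - t| := circle_dist_le _ _
        _ ≤ δ := by
            rw [abs_le]
            constructor
            · have := Nat.lt_floor_add_one (t/δ)
              rw [← hj] at this
              have h2 : t < ((j:ℝ)+1)*δ := by
                have h4 := (div_lt_iff₀ hδpos).1 this
                linarith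
              nlinarith
            · have h3 : (j:ℝ)*δ ≤ t := by
                have h4 := (le_div_iff₀ hδpos).1 hjt
                linarith
              linarith
    set s : Finset Circle1 := (Finset.range N).image
      (fun j : ℕ => h.symm (((j*δ : ℝ) : Circle1))) with hs
    have hcov : ∀ n : ℕ, (univ : Set Circle1) ⊆
        ⋃ c ∈ s, {y : Circle1 | dynDist (⇑f) n c y ≤ ε} := by
      intro n y _
      obtain ⟨j, hjN, hjd⟩ := hnet (h y)
      simp only [mem_iUnion, mem_setOf_eq]
      refine ⟨h.symm (((j*δ : ℝ) : Circle1)), ?_, ?_⟩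
      · rw [hs]
        exact Finset.mem_image_of_mem _ (Finset.mem_range.2 hjN)
      · rw [dynDist_le_iff hε.le]
        intro k _
        rw [hfk k, hfk k, Homeomorph.apply_symm_apply]
        have hAB : dist ((((j*δ : ℝ) : Circle1)) + k • a) (h y + k • a)
            = dist (((j*δ : ℝ) : Circle1)) (h y) := by
          rw [dist_eq_norm, dist_eq_norm]
          congr 1
          abel
        have : dist ((((j*δ : ℝ) : Circle1)) + k • a) (h y + k • a) < δ' := by
          rw [hAB]
          calc dist (((j*δ : ℝ) : Circle1)) (h y) ≤ δ := hjd
            _ < δ' := by rw [hddef]; linarith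
        exact (hδimp this).le
    have hub : ∀ n : ℕ, coverNum (⇑f) n univ ε ≤ N := by
      intro n
      calc coverNum (⇑f) n univ ε ≤ s.card := coverNum_le_card s (hcov n)
        _ ≤ N := le_trans Finset.card_image_le (le_of_eq (Finset.card_range N))
    have hlb : ∀ n : ℕ, 1 ≤ coverNum (⇑f) n univ ε := by
      intro n
      apply le_coverNum ⟨s, hcov n⟩
      intro s' hs'
      rcases Nat.eq_zero_or_pos s'.card with h0 | hpos
      · exfalso
        rw [Finset.card_eq_zero] at h0
        subst h0
        simpa using hs' (mem_univ (0 : Circle1))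
      · exact hpos
    exact limsup_coe_eq_zero (N : ℝ) hlb (fun n => by exact_mod_cast hub n)
  calc (⨆ ε : {e : ℝ // 0 < e}, Filter.atTop.limsup
      (fun n : ℕ => ((Real.log (coverNum (⇑f) n univ ε.1) / Real.log n : ℝ) : EReal)))
      = ⨆ _ : {e : ℝ // 0 < e}, (0:EReal) := by
        apply iSup_congr hzero
    _ = 0 := by
        haveI : Nonempty {e : ℝ // 0 < e} := ⟨⟨1, one_pos⟩⟩
        exact iSup_const


/-- degree-one property for integer translations -/
lemma deg_one_int {H : ℝ → ℝ} (h1 : ∀ x, H (x + 1) = H x + 1) :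
    ∀ (k : ℤ) (x : ℝ), H (x + k) = H x + k := by
  have hnat : ∀ (n : ℕ) (x : ℝ), H (x + n) = H x + n := by
    intro n
    induction n with
    | zero => simp
    | succ n ih => intro x; push_cast; rw [← add_assoc, h1, ih]; ring
  intro k x
  cases k with
  | ofNat n => exact_mod_cast hnat n x
  | negSucc n =>
    have := hnat (n+1) (x + Int.negSucc n)
    rw [Int.negSucc_eq] at *
    push_cast at this ⊢
    have h2 : x + -((n:ℝ) + 1) + ((n:ℝ) + 1) = x := by ring
    rw [h2] at this
    linarith

/-- descent of a (strictly monotone continuous degree-one) real map to a circle homeo -/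
lemma conjRot_of_semiconj (f : Circle1 ≃ₜ Circle1) (F : ℝ → ℝ)
    (hFlift : ∀ x : ℝ, f ((x : ℝ) : Circle1) = ((F x : ℝ) : Circle1))
    (H : ℝ → ℝ) (hHc : Continuous H) (hHm : StrictMono H)
    (hH1 : ∀ x, H (x + 1) = H x + 1) (α : ℝ) (hsc : ∀ x, H (F x) = H x + α) :
    ConjRotCircle f := by
  have hHsurj : Function.Surjective H := by
    intro y
    obtain ⟨n, hny⟩ := exists_nat_gt (|y - H 0|)
    have hd := deg_one_int hH1
    have h1' : H (0 - n) = H 0 - n := by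
      have := hd (-(n:ℤ)) 0
      push_cast at this
      rw [show (0:ℝ) - n = 0 + -(n:ℝ) from by ring]
      linarith
    have h2' : H (0 + n) = H 0 + n := by
      have := hd (n:ℤ) 0
      push_cast at this ⊢
      linarith
    have habs := abs_lt.1 hny
    have hmem : y ∈ Icc (H (0 - n)) (H (0 + n)) := by
      rw [h1', h2']; constructor <;> linarith
    obtain ⟨z, _, hz⟩ := intermediate_value_Icc (by linarith : (0:ℝ) - n ≤ 0 + n)
      hHc.continuousOn hmem
    exact ⟨z, hz⟩
  set E : ℝ ≃o ℝ := StrictMono.orderIsoOfSurjective H hHm hHsurj with hE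
  have hEapp : ∀ x, E x = H x := fun _ => rfl
  set K : ℝ → ℝ := ⇑E.symm with hK
  have hKH : ∀ x, K (H x) = x := fun x => E.symm_apply_apply x
  have hHK : ∀ x, H (K x) = x := fun x => E.apply_symm_apply x
  have hKc : Continuous K := (E.symm : ℝ ≃o ℝ).continuous
  have hK1 : ∀ x, K (x + 1) = K x + 1 := by
    intro x
    apply hHm.injective
    rw [hHK, hH1, hHK]
  have hHint := deg_one_int hH1
  have hKint := deg_one_int hK1
  -- the respects-relation facts
  have resp : ∀ (a b : ℝ), (QuotientAddGroup.leftRel (AddSubgroup.zmultiples (1:ℝ))) a b →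
      ((H a : ℝ) : Circle1) = ((H b : ℝ) : Circle1) := by
    intro a b hab
    rw [QuotientAddGroup.leftRel_apply, AddSubgroup.mem_zmultiples_iff] at hab
    obtain ⟨k, hk⟩ := hab
    have hba : b = a + k := by
      have : -a + b = (k : ℝ) := by simpa [zsmul_eq_mul] using hk.symm
      linarith
    rw [hba, hHint k a]
    exact (circle_coe_eq_coe_iff.2 ⟨k, rfl⟩).symm
  have respK : ∀ (a b : ℝ), (QuotientAddGroup.leftRel (AddSubgroup.zmultiples (1:ℝ))) a b →
      ((K a : ℝ) : Circle1) = ((K b : ℝ) : Circle1) := by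
    intro a b hab
    rw [QuotientAddGroup.leftRel_apply, AddSubgroup.mem_zmultiples_iff] at hab
    obtain ⟨k, hk⟩ := hab
    have hba : b = a + k := by
      have : -a + b = (k : ℝ) := by simpa [zsmul_eq_mul] using hk.symm
      linarith
    rw [hba, hKint k a]
    exact (circle_coe_eq_coe_iff.2 ⟨k, rfl⟩).symm
  set hmap : Circle1 → Circle1 :=
    fun y => Quotient.liftOn' y (fun t => ((H t : ℝ) : Circle1)) (fun a b hab => resp a b hab)
    with hhmap
  set kmap : Circle1 → Circle1 :=
    fun y => Quotient.liftOn' y (fun t => ((K t : ℝ) : Circle1)) (fun a b hab => respK a b hab)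
    with hkmap
  have hmap_coe : ∀ t : ℝ, hmap ((t : ℝ) : Circle1) = ((H t : ℝ) : Circle1) := fun _ => rfl
  have kmap_coe : ∀ t : ℝ, kmap ((t : ℝ) : Circle1) = ((K t : ℝ) : Circle1) := fun _ => rfl
  have hmc : Continuous hmap :=
    Continuous.quotient_liftOn' ((continuous_quotient_mk').comp hHc) _
  have kmc : Continuous kmap :=
    Continuous.quotient_liftOn' ((continuous_quotient_mk').comp hKc) _
  set hh : Circle1 ≃ₜ Circle1 :=
    { toFun := hmap
      invFun := kmap
      left_inv := by
        intro y
        induction y using QuotientAddGroup.induction_on with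
        | H z => rw [hmap_coe, kmap_coe, hKH]
      right_inv := by
        intro y
        induction y using QuotientAddGroup.induction_on with
        | H z => rw [kmap_coe, hmap_coe, hHK]
      continuous_toFun := hmc
      continuous_invFun := kmc } with hhh
  refine ⟨hh, ((α : ℝ) : Circle1), ?_⟩
  intro x
  induction x using QuotientAddGroup.induction_on with
  | H t =>
  have h1 : hh.symm ((t : ℝ) : Circle1) = ((K t : ℝ) : Circle1) := kmap_coe t
  show hmap (f (hh.symm ((t : ℝ) : Circle1))) = _
  rw [h1, hFlift, hmap_coe, hsc]
  rw [show (((H (K t) + α : ℝ)) : Circle1) = ((H (K t) : ℝ) : Circle1) + ((α : ℝ) : Circle1) from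
    by rw [← QuotientAddGroup.mk_add]]
  rw [hHK]

lemma symm_lift (f : Circle1 ≃ₜ Circle1) (F : ℝ → ℝ) (hFcont : Continuous F)
    (hFmono : StrictMono F)
    (hFlift : ∀ x : ℝ, f ((x : ℝ) : Circle1) = ((F x : ℝ) : Circle1))
    (hF1 : ∀ x : ℝ, F (x + 1) = F x + 1) :
    ∃ G : ℝ → ℝ, Continuous G ∧ StrictMono G ∧
      (∀ x : ℝ, f.symm ((x : ℝ) : Circle1) = ((G x : ℝ) : Circle1)) := by
  have hFsurj : Function.Surjective F := surj_of_deg_one hFcont hF1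
  set E : ℝ ≃o ℝ := StrictMono.orderIsoOfSurjective F hFmono hFsurj with hE
  refine ⟨⇑E.symm, (E.symm : ℝ ≃o ℝ).continuous, E.symm.strictMono, ?_⟩
  intro x
  apply f.injective
  rw [Homeomorph.apply_symm_apply, hFlift]
  have : F (E.symm x) = x := E.apply_symm_apply x
  rw [this]

lemma conjRot_symm {f : Circle1 ≃ₜ Circle1} (h : ConjRotCircle f.symm) : ConjRotCircle f := by
  obtain ⟨h₀, a, hc⟩ := h
  refine ⟨h₀, -a, ?_⟩
  intro x
  set y := h₀ (f (h₀.symm x)) with hy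
  have h1 : h₀.symm y = f (h₀.symm x) := by rw [hy, Homeomorph.symm_apply_apply]
  have h2 : f.symm (h₀.symm y) = h₀.symm x := by rw [h1, Homeomorph.symm_apply_apply]
  have h3 := hc y
  rw [h2] at h3
  rw [Homeomorph.apply_symm_apply] at h3
  rw [h3]
  abel

lemma cont_iterate {X : Type*} [TopologicalSpace X] {F : X → X} (h : Continuous F) (k : ℕ) :
    Continuous (F^[k]) := by
  induction k with
  | zero => simpa using continuous_id
  | succ k ih => rw [Function.iterate_succ]; exact ih.comp h

lemma lift_iter_gen (g : Circle1 → Circle1) (G : ℝ → ℝ)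
    (h : ∀ x : ℝ, g ((x : ℝ) : Circle1) = ((G x : ℝ) : Circle1)) :
    ∀ (s : ℕ) (x : ℝ), g^[s] ((x : ℝ) : Circle1) = ((G^[s] x : ℝ) : Circle1) := by
  intro s
  induction s with
  | zero => intro x; simp
  | succ s ih =>
    intro x
    rw [Function.iterate_succ_apply', Function.iterate_succ_apply', ih, h]


lemma rightLim_comp_aux {H φ : ℝ → ℝ} (hH : Monotone H) (hφc : Continuous φ)
    (hφm : StrictMono φ) {c : ℝ} (heq : ∀ t, H (φ t) = c + H t) (x : ℝ) :
    Function.rightLim H (φ x) = c + Function.rightLim H x ∧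
      Function.leftLim H (φ x) = c + Function.leftLim H x := by
  constructor
  · have h1 : Tendsto φ (nhdsWithin x (Ioi x)) (nhdsWithin (φ x) (Ioi (φ x))) := by
      rw [tendsto_nhdsWithin_iff]
      exact ⟨(hφc.tendsto x).mono_left nhdsWithin_le_nhds,
        eventually_nhdsWithin_of_forall (fun t ht => hφm ht)⟩
    have h3 : Tendsto (fun t => H (φ t)) (nhdsWithin x (Ioi x))
        (nhds (Function.rightLim H (φ x))) := (hH.tendsto_rightLim _).comp h1
    have h3' : Tendsto (fun t => c + H t) (nhdsWithin x (Ioi x))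
        (nhds (Function.rightLim H (φ x))) := by
      apply h3.congr
      intro t; rw [heq]
    have h4 : Tendsto (fun t => c + H t) (nhdsWithin x (Ioi x))
        (nhds (c + Function.rightLim H x)) :=
      tendsto_const_nhds.add (hH.tendsto_rightLim x)
    exact tendsto_nhds_unique h3' h4
  · have h1 : Tendsto φ (nhdsWithin x (Iio x)) (nhdsWithin (φ x) (Iio (φ x))) := by
      rw [tendsto_nhdsWithin_iff]
      exact ⟨(hφc.tendsto x).mono_left nhdsWithin_le_nhds,
        eventually_nhdsWithin_of_forall (fun t ht => hφm ht)⟩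
    have h3 : Tendsto (fun t => H (φ t)) (nhdsWithin x (Iio x))
        (nhds (Function.leftLim H (φ x))) := (hH.tendsto_leftLim _).comp h1
    have h3' : Tendsto (fun t => c + H t) (nhdsWithin x (Iio x))
        (nhds (Function.leftLim H (φ x))) := by
      apply h3.congr
      intro t; rw [heq]
    have h4 : Tendsto (fun t => c + H t) (nhdsWithin x (Iio x))
        (nhds (c + Function.leftLim H x)) :=
      tendsto_const_nhds.add (hH.tendsto_leftLim x)
    exact tendsto_nhds_unique h3' h4

lemma cont_of_nonflat {F H : ℝ → ℝ} (hFcont : Continuous F) (hFmono : StrictMono F)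
    (hF1 : ∀ x, F (x + 1) = F x + 1)
    (hHm : Monotone H) (hH1 : ∀ x, H (x + 1) = H x + 1) {α : ℝ}
    (hsc : ∀ x, H (F x) = α + H x)
    (hnp : ∀ (m : ℕ) (k : ℤ) (x : ℝ), 1 ≤ m → F^[m] x ≠ x + k) :
    Continuous H := by
  rw [continuous_iff_continuousAt]
  by_contra hcont
  push_neg at hcont
  obtain ⟨x₀, hx₀⟩ := hcont
  rw [hHm.continuousAt_iff_leftLim_eq_rightLim] at hx₀
  set Jmp : ℝ → ℝ := fun z => Function.rightLim H z - Function.leftLim H z with hJ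
  have hJnonneg : ∀ z, 0 ≤ Jmp z := fun z => sub_nonneg.2 (hHm.leftLim_le_rightLim le_rfl)
  set j₀ := Jmp x₀ with hj₀
  have hj₀pos : 0 < j₀ := by
    rcases lt_of_le_of_ne (hHm.leftLim_le_rightLim (le_refl x₀)) hx₀ with h
    simp only [hj₀, hJ]
    linarith
  have hJF : ∀ z, Jmp (F z) = Jmp z := by
    intro z
    obtain ⟨hr, hl⟩ := rightLim_comp_aux hHm hFcont hFmono (c := α) (fun t => hsc t) z
    simp only [hJ, hr, hl]
    ring
  have hJint : ∀ (k : ℤ) (z : ℝ), Jmp (z + k) = Jmp z := by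
    intro k z
    have heq : ∀ t : ℝ, H (t + (k:ℝ)) = (k:ℝ) + H t := by
      intro t
      rw [deg_one_int hH1 k t]
      ring
    obtain ⟨hr, hl⟩ := rightLim_comp_aux hHm (by continuity)
      (fun a b hab => by simpa using hab : StrictMono (fun t : ℝ => t + (k:ℝ))) heq z
    simp only [hJ] at hr hl ⊢
    rw [hr, hl]
    ring
  have hJiter : ∀ m : ℕ, Jmp (F^[m] x₀) = j₀ := by
    intro m
    induction m with
    | zero => simp [hj₀]
    | succ m ih => rw [Function.iterate_succ_apply', hJF, ih]
  set y : ℕ → ℝ := fun m => Int.fract (F^[m] x₀) with hy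
  have hy01 : ∀ m, 0 ≤ y m ∧ y m < 1 := fun m => ⟨Int.fract_nonneg _, Int.fract_lt_one _⟩
  have hJy : ∀ m, Jmp (y m) = j₀ := by
    intro m
    have : y m = F^[m] x₀ + (-⌊F^[m] x₀⌋ : ℤ) := by
      simp only [hy, Int.fract]
      push_cast
      ring
    rw [this, hJint, hJiter]
  have hykey : ∀ m m' : ℕ, m' < m → y m = y m' → False := by
    intro m m' hlt hmm
    have h1 : F^[m] x₀ = F^[m'] x₀ + ((⌊F^[m] x₀⌋ - ⌊F^[m'] x₀⌋ : ℤ) : ℝ) := by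
      have h5 := hmm
      simp only [hy, Int.fract] at h5
      push_cast
      linarith
    have hd := deg_one_int (iter_add_one hF1 m')
    have h3 : m' + (m - m') = m := by omega
    have h2 : F^[m'] (F^[m - m'] x₀) = F^[m'] (x₀ + ((⌊F^[m] x₀⌋ - ⌊F^[m'] x₀⌋ : ℤ) : ℝ)) := by
      calc F^[m'] (F^[m - m'] x₀) = F^[m' + (m - m')] x₀ :=
            (Function.iterate_add_apply F m' (m - m') x₀).symm
        _ = F^[m] x₀ := by rw [h3]
        _ = F^[m'] x₀ + ((⌊F^[m] x₀⌋ - ⌊F^[m'] x₀⌋ : ℤ) : ℝ) := h1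
        _ = F^[m'] (x₀ + ((⌊F^[m] x₀⌋ - ⌊F^[m'] x₀⌋ : ℤ) : ℝ)) := (hd _ x₀).symm
    have h4 := (hFmono.iterate m').injective h2
    exact hnp (m - m') _ x₀ (by omega) h4
  have hyinj : Function.Injective y := by
    intro m m' hmm
    by_contra hne
    rcases Nat.lt_or_ge m' m with h | h
    · exact hykey m m' h hmm
    · exact hykey m' m (by omega) hmm.symm
  -- measure argument
  set I : ℕ → Set ℝ := fun m => Ioo (Function.leftLim H (y m)) (Function.rightLim H (y m))
    with hI
  have hIsub : ∀ m, I m ⊆ Ioo (H (-1)) (H 2) := by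
    intro m
    apply Ioo_subset_Ioo
    · exact hHm.le_leftLim (by linarith [(hy01 m).1])
    · exact hHm.rightLim_le (by linarith [(hy01 m).2])
  have hIkey : ∀ m m', y m < y m' → Disjoint (I m) (I m') := by
    intro m m' hlt
    rw [Set.disjoint_left]
    intro z hz hz'
    have hmid : Function.rightLim H (y m) ≤ Function.leftLim H (y m') := by
      calc Function.rightLim H (y m) ≤ H ((y m + y m')/2) := hHm.rightLim_le (by linarith)
        _ ≤ Function.leftLim H (y m') := hHm.le_leftLim (by linarith)
    exact absurd (lt_of_lt_of_le hz.2 (le_trans hmid hz'.1.le)) (lt_irrefl z)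
  have hIdisj : ∀ m m', m ≠ m' → Disjoint (I m) (I m') := by
    intro m m' hne
    rcases lt_trichotomy (y m) (y m') with h | h | h
    · exact hIkey m m' h
    · exact absurd (hyinj h) hne
    · exact (hIkey m' m h).symm
  set N := ⌈(H 2 - H (-1)) / j₀⌉₊ + 1 with hN
  have hvol : ∀ m, MeasureTheory.volume (I m) = ENNReal.ofReal j₀ := by
    intro m
    rw [hI]
    rw [Real.volume_Ioo]
    congr 1
    have := hJy m
    simp only [hJ] at this
    linarith
  have hsum : MeasureTheory.volume (⋃ m ∈ Finset.range N, I m)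
      = ∑ m ∈ Finset.range N, MeasureTheory.volume (I m) := by
    apply MeasureTheory.measure_biUnion_finset
    · intro m _ m' _ hne
      exact hIdisj m m' hne
    · intro m _
      exact measurableSet_Ioo
  have hle : MeasureTheory.volume (⋃ m ∈ Finset.range N, I m)
      ≤ ENNReal.ofReal (H 2 - H (-1)) := by
    rw [← Real.volume_Ioo]
    apply MeasureTheory.measure_mono
    exact Set.iUnion₂_subset (fun m _ => hIsub m)
  rw [hsum] at hle
  have hrhs : ∑ m ∈ Finset.range N, MeasureTheory.volume (I m)
      = N * ENNReal.ofReal j₀ := by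
    simp [hvol, Finset.sum_const]
  rw [hrhs] at hle
  have hNR : (N : ENNReal) * ENNReal.ofReal j₀ = ENNReal.ofReal (N * j₀) := by
    rw [ENNReal.ofReal_mul (by positivity)]
    congr 1
    rw [ENNReal.ofReal_natCast]
  rw [hNR] at hle
  have hfin : (N : ℝ) * j₀ ≤ H 2 - H (-1) := by
    have h0 : (0:ℝ) ≤ H 2 - H (-1) := sub_nonneg.2 (hHm (by norm_num))
    exact (ENNReal.ofReal_le_ofReal_iff h0).1 hle
  have hNbig : (H 2 - H (-1)) / j₀ < N := by
    rw [hN]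
    push_cast
    linarith [Nat.le_ceil ((H 2 - H (-1)) / j₀)]
  rw [div_lt_iff₀ hj₀pos] at hNbig
  linarith

lemma key_of_flat (f : Circle1 ≃ₜ Circle1) (F : ℝ → ℝ)
    (hFliftIt : ∀ (k : ℕ) (x : ℝ), (⇑f)^[k] ((x : ℝ) : Circle1) = ((F^[k] x : ℝ) : Circle1))
    (H : ℝ → ℝ) (hHm : Monotone H) (hH1 : ∀ x, H (x + 1) = H x + 1) (α : ℝ)
    (hirr : Irrational α)
    (hscm : ∀ (m : ℕ) (x : ℝ), H (F^[m] x) = m * α + H x)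
    (u v : ℝ) (huv : u < v) (hflat : H u = H v) :
    ∃ c : Circle1, ∃ δ : ℝ, 0 < δ ∧ ∀ m : ℕ, 1 ≤ m → δ ≤ dist ((⇑f)^[m] c) c := by
  set v' := min v (u + 1/2) with hv'
  have huv' : u < v' := lt_min huv (by linarith)
  have hv'le : v' ≤ v := min_le_left _ _
  have hv'u : v' - u ≤ 1/2 := by
    have : v' ≤ u + 1/2 := min_le_right _ _
    linarith
  have hHv' : H v' = H u :=
    le_antisymm (hflat ▸ hHm hv'le) (hHm huv'.le)
  set w := (u + v')/2 with hw
  set δ := (v' - u)/2 with hδdef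
  have hδpos : 0 < δ := by rw [hδdef]; linarith
  refine ⟨((w : ℝ) : Circle1), δ, hδpos, ?_⟩
  intro m hm
  by_contra hltc
  push_neg at hltc
  rw [hFliftIt m w] at hltc
  obtain ⟨k, hk⟩ := circle_dist_lt hltc
  rw [abs_lt] at hk
  have hrange : u + k ≤ F^[m] w ∧ F^[m] w ≤ v' + k := by
    constructor
    · have : w - δ = u := by rw [hw, hδdef]; ring
      linarith [hk.1]
    · have : w + δ = v' := by rw [hw, hδdef]; ring
      linarith [hk.2]
  have hHw : H w = H u := by
    apply le_antisymm
    · rw [← hHv']; exact hHm (by rw [hw]; linarith)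
    · exact hHm (by rw [hw]; linarith)
  have hd := deg_one_int hH1
  have e1 : H u + k ≤ (m : ℝ) * α + H u := by
    calc H u + (k:ℝ) = H (u + k) := (hd k u).symm
      _ ≤ H (F^[m] w) := hHm hrange.1
      _ = m * α + H w := hscm m w
      _ = m * α + H u := by rw [hHw]
  have e2 : (m : ℝ) * α + H u ≤ H u + k := by
    calc (m:ℝ) * α + H u = m * α + H w := by rw [hHw]
      _ = H (F^[m] w) := (hscm m w).symm
      _ ≤ H (v' + k) := hHm hrange.2
      _ = H v' + k := hd k v'
      _ = H u + k := by rw [hHv']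
  have heq : (m : ℝ) * α = k := by linarith
  have hmpos : (0:ℝ) < m := by exact_mod_cast hm
  apply hirr
  refine ⟨(k : ℚ) / (m : ℚ), ?_⟩
  push_cast
  rw [eq_comm, eq_div_iff (by positivity)]
  linarith [heq]
section RatKey
open Filter Metric Set Function

lemma key_of_rational (f : Circle1 ≃ₜ Circle1) (F : ℝ → ℝ)
    (hFcont : Continuous F) (hFmono : StrictMono F) (hF1 : ∀ x, F (x + 1) = F x + 1)
    (hFliftIt : ∀ (k : ℕ) (x : ℝ), (⇑f)^[k] ((x : ℝ) : Circle1) = ((F^[k] x : ℝ) : Circle1))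
    (q : ℕ) (hq : 0 < q) (p : ℤ)
    (hper : ∀ (m : ℕ) (k : ℤ) (x : ℝ), 1 ≤ m → F^[m] x = x + k → q ∣ m)
    (x₀ : ℝ) (hx₀ : F^[q] x₀ = x₀ + p)
    (y : ℝ) (hy : F^[q] y ≠ y + p) :
    ∃ c : Circle1, ∃ δ : ℝ, 0 < δ ∧ ∀ m : ℕ, 1 ≤ m → δ ≤ dist ((⇑f)^[m] c) c := by
  classical
  set G : ℝ → ℝ := fun x => F^[q] x - p with hGdef
  have hGm : StrictMono G := fun a b hab => by
    simp only [hGdef]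
    exact sub_lt_sub_right ((hFmono.iterate q) hab) _
  have hGc : Continuous G := (cont_iterate hFcont q).sub continuous_const
  have hG1 : ∀ x, G (x + 1) = G x + 1 := by
    intro x
    simp only [hGdef]
    rw [iter_add_one hF1 q x]
    ring
  have hGint := deg_one_int hG1
  have hGx₀ : G x₀ = x₀ := by simp only [hGdef]; rw [hx₀]; ring
  have hGy : G y ≠ y := by
    simp only [hGdef]
    intro h
    exact hy (by linarith [h] : F^[q] y = y + p)
  have hFq_int := deg_one_int (iter_add_one hF1 q)
  -- G^[s] x = F^[q*s] x - s*p
  have hGiter : ∀ (s : ℕ) (x : ℝ), G^[s] x = F^[q * s] x - (s : ℝ) * p := by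
    intro s
    induction s with
    | zero => intro x; simp
    | succ s ih =>
      intro x
      rw [Function.iterate_succ_apply', ih]
      simp only [hGdef]
      have h1 : F^[q] (F^[q * s] x - (s:ℝ) * p) = F^[q] (F^[q * s] x) - (s:ℝ) * p := by
        have := hFq_int (-(s * p)) (F^[q * s] x)
        push_cast at this
        rw [show F^[q*s] x - (s:ℝ)*p = F^[q*s] x + (-((s:ℝ)*p)) from by ring, this]
        ring
      rw [h1, ← Function.iterate_add_apply]
      have h2 : q + q * s = q * (s + 1) := by ring
      rw [h2]
      push_cast
      ring
  set g : Circle1 → Circle1 := (⇑f)^[q] with hgdef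
  have hg : ∀ x : ℝ, g ((x : ℝ) : Circle1) = ((G x : ℝ) : Circle1) := by
    intro x
    rw [hgdef, hFliftIt q x]
    exact circle_coe_eq_coe_iff.2 ⟨p, by simp only [hGdef]; ring⟩
  have hgs := lift_iter_gen g G hg
  -- no integer displacement for iterates of G
  have hG_no_move : ∀ (s : ℕ) (z : ℝ) (j : ℤ), 1 ≤ s → G^[s] z = z + j → j = 0 := by
    intro s z j hs hmove
    have hGsfix : G^[s] x₀ = x₀ := Function.iterate_fixed hGx₀ s
    have hGsint := fun (k : ℤ) (x : ℝ) => deg_one_int (iter_add_one hG1 s) k x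
    have hGsmono : Monotone (G^[s]) := (hGm.monotone).iterate s
    have hGst : ∀ (t : ℕ), (G^[s])^[t] z = z + (t : ℝ) * j := by
      intro t
      induction t with
      | zero => simp
      | succ t ih =>
        rw [Function.iterate_succ_apply', ih]
        have : z + (t:ℝ) * j = z + ((t * j : ℤ) : ℝ) := by push_cast; ring
        rw [this, hGsint (t * j) z, hmove]
        push_cast
        ring
    rcases lt_trichotomy j 0 with hj | hj | hj
    · exfalso
      set k : ℤ := -⌈x₀ - z⌉ with hk
      have hbz : x₀ + (k:ℝ) ≤ z := by
        rw [hk]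
        push_cast
        linarith [Int.le_ceil (x₀ - z)]
      have hfixb : G^[s] (x₀ + (k:ℝ)) = x₀ + (k:ℝ) := by
        rw [hGsint k x₀, hGsfix]
      have hlb : ∀ t : ℕ, x₀ + (k:ℝ) ≤ (G^[s])^[t] z := by
        intro t
        induction t with
        | zero => simpa using hbz
        | succ t ih =>
          rw [Function.iterate_succ_apply']
          calc x₀ + (k:ℝ) = G^[s] (x₀ + (k:ℝ)) := hfixb.symm
            _ ≤ G^[s] ((G^[s])^[t] z) := hGsmono ih
      obtain ⟨t, ht⟩ := exists_nat_gt (z - (x₀ + (k:ℝ)))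
      have h1 := hlb t
      rw [hGst t] at h1
      have hj1 : (j : ℝ) ≤ -1 := by
        have : j ≤ -1 := by omega
        exact_mod_cast this
      nlinarith
    · exact hj
    · exfalso
      set k : ℤ := ⌈z - x₀⌉ with hk
      have hbz : z ≤ x₀ + (k:ℝ) := by
        rw [hk]
        linarith [Int.le_ceil (z - x₀)]
      have hfixb : G^[s] (x₀ + (k:ℝ)) = x₀ + (k:ℝ) := by
        rw [hGsint k x₀, hGsfix]
      have hub : ∀ t : ℕ, (G^[s])^[t] z ≤ x₀ + (k:ℝ) := by
        intro t
        induction t with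
        | zero => simpa using hbz
        | succ t ih =>
          rw [Function.iterate_succ_apply']
          calc G^[s] ((G^[s])^[t] z) ≤ G^[s] (x₀ + (k:ℝ)) := hGsmono ih
            _ = x₀ + (k:ℝ) := hfixb
      obtain ⟨t, ht⟩ := exists_nat_gt (x₀ + (k:ℝ) - z)
      have h1 := hub t
      rw [hGst t] at h1
      have hj1 : (1:ℝ) ≤ j := by exact_mod_cast hj
      nlinarith
  -- orbit of y under G is strictly displaced
  have hGsy_ne : ∀ s : ℕ, 1 ≤ s → G^[s] y ≠ y := by
    intro s hs
    rcases lt_or_gt_of_ne hGy with hup | hdn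
    · -- G y < y : orbit strictly decreasing
      have hchain : ∀ t : ℕ, G^[t + 1] y < G^[t] y := by
        intro t
        rw [Function.iterate_succ_apply]
        exact (hGm.iterate t) hup
      have hstrict : StrictAnti (fun t => G^[t] y) := strictAnti_nat_of_succ_lt (fun t => hchain t)
      intro h
      have := hstrict (Nat.lt_of_lt_of_le Nat.zero_lt_one hs)
      simp only [Function.iterate_zero_apply] at this
      rw [h] at this
      exact lt_irrefl y this
    · have hchain : ∀ t : ℕ, G^[t] y < G^[t + 1] y := by
        intro t
        rw [Function.iterate_succ_apply]
        exact (hGm.iterate t) hdn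
      have hstrict : StrictMono (fun t => G^[t] y) := strictMono_nat_of_lt_succ (fun t => hchain t)
      intro h
      have := hstrict (Nat.lt_of_lt_of_le Nat.zero_lt_one hs)
      simp only [Function.iterate_zero_apply] at this
      rw [h] at this
      exact lt_irrefl y this
  -- c := π y is not periodic
  have hnotper : ∀ m : ℕ, 1 ≤ m → (⇑f)^[m] ((y : ℝ) : Circle1) ≠ ((y : ℝ) : Circle1) := by
    intro m hm heq
    rw [hFliftIt m y] at heq
    obtain ⟨k, hk⟩ := circle_coe_eq_coe_iff.1 heq
    obtain ⟨s, rfl⟩ := hper m k y hm hk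
    have hs : 1 ≤ s := by
      by_contra h
      push_neg at h
      interval_cases s <;> omega
    have hGs : G^[s] y = y + ((k - s * p : ℤ) : ℝ) := by
      rw [hGiter s y, hk]
      push_cast
      ring
    have := hG_no_move s y (k - s * p) hs hGs
    rw [this] at hGs
    push_cast at hGs
    rw [add_zero] at hGs
    exact hGsy_ne s hs hGs
  -- limit of the g-orbit of y
  have horbit : ∃ L : ℝ, G L = L ∧ Tendsto (fun s => G^[s] y) atTop (nhds L) := by
    rcases lt_or_gt_of_ne hGy with hdn | hup
    · -- decreasing, bounded below
      set k : ℤ := -⌈x₀ - y⌉ with hk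
      have hbz : x₀ + (k:ℝ) ≤ y := by
        rw [hk]; push_cast; linarith [Int.le_ceil (x₀ - y)]
      have hfixb : G (x₀ + (k:ℝ)) = x₀ + (k:ℝ) := by rw [hGint k x₀, hGx₀]
      have hlb : ∀ s : ℕ, x₀ + (k:ℝ) ≤ G^[s] y := by
        intro s
        induction s with
        | zero => simpa using hbz
        | succ s ih =>
          rw [Function.iterate_succ_apply']
          calc x₀ + (k:ℝ) = G (x₀ + (k:ℝ)) := hfixb.symm
            _ ≤ G (G^[s] y) := hGm.monotone ih
      have hanti : Antitone (fun s : ℕ => G^[s] y) := by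
        apply antitone_nat_of_succ_le
        intro s
        rw [Function.iterate_succ_apply]
        exact ((hGm.monotone).iterate s) hdn.le
      have hbdd : BddBelow (Set.range (fun s : ℕ => G^[s] y)) := by
        refine ⟨x₀ + (k:ℝ), ?_⟩
        rintro z ⟨s, rfl⟩
        exact hlb s
      refine ⟨⨅ s, G^[s] y, ?_, tendsto_atTop_ciInf hanti hbdd⟩
      have hL := tendsto_atTop_ciInf hanti hbdd
      have h1 : Tendsto (fun s : ℕ => G^[s + 1] y) atTop (nhds (⨅ s, G^[s] y)) := by
        have := hL.comp (tendsto_add_atTop_nat 1)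
        exact this
      have h2 : Tendsto (fun s : ℕ => G (G^[s] y)) atTop (nhds (G (⨅ s, G^[s] y))) :=
        (hGc.tendsto _).comp hL
      have h3 : (fun s : ℕ => G (G^[s] y)) = (fun s : ℕ => G^[s + 1] y) := by
        funext s
        rw [Function.iterate_succ_apply']
      rw [h3] at h2
      exact tendsto_nhds_unique h2 h1
    · set k : ℤ := ⌈y - x₀⌉ with hk
      have hbz : y ≤ x₀ + (k:ℝ) := by
        rw [hk]; linarith [Int.le_ceil (y - x₀)]
      have hfixb : G (x₀ + (k:ℝ)) = x₀ + (k:ℝ) := by rw [hGint k x₀, hGx₀]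
      have hub : ∀ s : ℕ, G^[s] y ≤ x₀ + (k:ℝ) := by
        intro s
        induction s with
        | zero => simpa using hbz
        | succ s ih =>
          rw [Function.iterate_succ_apply']
          calc G (G^[s] y) ≤ G (x₀ + (k:ℝ)) := hGm.monotone ih
            _ = x₀ + (k:ℝ) := hfixb
      have hmono : Monotone (fun s : ℕ => G^[s] y) := by
        apply monotone_nat_of_le_succ
        intro s
        rw [Function.iterate_succ_apply]
        exact ((hGm.monotone).iterate s) hup.le
      have hbdd : BddAbove (Set.range (fun s : ℕ => G^[s] y)) := by
        refine ⟨x₀ + (k:ℝ), ?_⟩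
        rintro z ⟨s, rfl⟩
        exact hub s
      refine ⟨⨆ s, G^[s] y, ?_, tendsto_atTop_ciSup hmono hbdd⟩
      have hL := tendsto_atTop_ciSup hmono hbdd
      have h1 : Tendsto (fun s : ℕ => G^[s + 1] y) atTop (nhds (⨆ s, G^[s] y)) := by
        have := hL.comp (tendsto_add_atTop_nat 1)
        exact this
      have h2 : Tendsto (fun s : ℕ => G (G^[s] y)) atTop (nhds (G (⨆ s, G^[s] y))) :=
        (hGc.tendsto _).comp hL
      have h3 : (fun s : ℕ => G (G^[s] y)) = (fun s : ℕ => G^[s + 1] y) := by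
        funext s
        rw [Function.iterate_succ_apply']
      rw [h3] at h2
      exact tendsto_nhds_unique h2 h1
  obtain ⟨L, hGL, hLt⟩ := horbit
  have hwL : Tendsto (fun s : ℕ => g^[s] ((y : ℝ) : Circle1)) atTop (nhds ((L : ℝ) : Circle1)) := by
    have hc : Continuous (fun t : ℝ => ((t : ℝ) : Circle1)) := continuous_quotient_mk'
    have := (hc.tendsto L).comp hLt
    apply Tendsto.congr _ this
    intro s
    exact (hgs s y).symm
  have hgL : g ((L : ℝ) : Circle1) = ((L : ℝ) : Circle1) := by rw [hg, hGL]
  -- f^[r] L' ≠ π y for r < q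
  have hrL : ∀ r : ℕ, r < q → (⇑f)^[r] ((L : ℝ) : Circle1) ≠ ((y : ℝ) : Circle1) := by
    intro r hr heq
    apply hnotper q hq
    calc (⇑f)^[q] ((y : ℝ) : Circle1) = (⇑f)^[q] ((⇑f)^[r] ((L : ℝ) : Circle1)) := by rw [heq]
      _ = (⇑f)^[r] ((⇑f)^[q] ((L : ℝ) : Circle1)) := by
          rw [← Function.iterate_add_apply, ← Function.iterate_add_apply, Nat.add_comm]
      _ = (⇑f)^[r] ((L : ℝ) : Circle1) := by rw [← hgdef, hgL]
      _ = ((y : ℝ) : Circle1) := heq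
  have hqne : (Finset.range q).Nonempty := ⟨0, Finset.mem_range.2 hq⟩
  set ε₀ := (Finset.range q).inf' hqne (fun r => dist ((⇑f)^[r] ((L:ℝ):Circle1)) ((y:ℝ):Circle1))
    with hε₀
  have hε₀pos : 0 < ε₀ := by
    rw [hε₀, Finset.lt_inf'_iff]
    intro r hrq
    exact dist_pos.2 (hrL r (Finset.mem_range.1 hrq))
  -- continuity moduli
  have hmod : ∀ r : ℕ, ∃ η : ℝ, 0 < η ∧ ∀ z : Circle1, dist z ((L:ℝ):Circle1) < η →
      dist ((⇑f)^[r] z) ((⇑f)^[r] ((L:ℝ):Circle1)) < ε₀ / 2 := by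
    intro r
    have hcont : ContinuousAt ((⇑f)^[r]) ((L:ℝ):Circle1) :=
      (cont_iterate f.continuous r).continuousAt
    obtain ⟨η, hη, hmod⟩ := Metric.continuousAt_iff.1 hcont (ε₀/2) (by positivity)
    exact ⟨η, hη, fun z hz => hmod hz⟩
  choose η hηpos hηmod using hmod
  set ηm := (Finset.range q).inf' hqne η with hηm
  have hηmpos : 0 < ηm := by
    rw [hηm, Finset.lt_inf'_iff]
    intro r _
    exact hηpos r
  obtain ⟨s₀, hs₀⟩ := Metric.tendsto_atTop.1 hwL ηm hηmpos
  have hfar : ∀ m : ℕ, q * s₀ ≤ m → ε₀ / 2 ≤ dist ((⇑f)^[m] ((y:ℝ):Circle1)) ((y:ℝ):Circle1) := by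
    intro m hm
    set r := m % q with hr
    set s := m / q with hs
    have hrq : r < q := Nat.mod_lt m hq
    have hss₀ : s₀ ≤ s := by
      rw [hs, Nat.le_div_iff_mul_le hq]
      rw [mul_comm] at hm
      exact hm
    have hiter : (⇑f)^[m] ((y:ℝ):Circle1) = (⇑f)^[r] (g^[s] ((y:ℝ):Circle1)) := by
      rw [hgdef, ← Function.iterate_mul, ← Function.iterate_add_apply]
      congr 1
      rw [hr, hs]
      exact (Nat.mod_add_div m q).symm
    have hnear : dist (g^[s] ((y:ℝ):Circle1)) ((L:ℝ):Circle1) < η r := by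
      calc dist (g^[s] ((y:ℝ):Circle1)) ((L:ℝ):Circle1) < ηm := hs₀ s hss₀
        _ ≤ η r := by
            rw [hηm]
            exact Finset.inf'_le η (Finset.mem_range.2 hrq)
    have h1 : dist ((⇑f)^[r] (g^[s] ((y:ℝ):Circle1))) ((⇑f)^[r] ((L:ℝ):Circle1)) < ε₀ / 2 :=
      hηmod r _ hnear
    have h2 : ε₀ ≤ dist ((⇑f)^[r] ((L:ℝ):Circle1)) ((y:ℝ):Circle1) := by
      rw [hε₀]
      exact Finset.inf'_le _ (Finset.mem_range.2 hrq)
    rw [hiter]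
    have htri := dist_triangle ((⇑f)^[r] ((L:ℝ):Circle1)) ((⇑f)^[r] (g^[s] ((y:ℝ):Circle1)))
      ((y:ℝ):Circle1)
    rw [dist_comm ((⇑f)^[r] ((L:ℝ):Circle1)) ((⇑f)^[r] (g^[s] ((y:ℝ):Circle1)))] at htri
    linarith
  -- final min over the finitely many small m
  set T := insert (ε₀/2) ((Finset.Ico 1 (q * s₀)).image
    (fun m => dist ((⇑f)^[m] ((y:ℝ):Circle1)) ((y:ℝ):Circle1))) with hT
  have hTne : T.Nonempty := ⟨ε₀/2, Finset.mem_insert_self _ _⟩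
  refine ⟨((y:ℝ):Circle1), T.min' hTne, ?_, ?_⟩
  · rw [Finset.lt_min'_iff]
    intro z hz
    rw [hT, Finset.mem_insert] at hz
    rcases hz with rfl | hz
    · positivity
    · obtain ⟨m, hmI, rfl⟩ := Finset.mem_image.1 hz
      rw [Finset.mem_Ico] at hmI
      exact dist_pos.2 (hnotper m hmI.1)
  · intro m hm
    rcases lt_or_ge m (q * s₀) with hsmall | hbig
    · apply Finset.min'_le
      rw [hT, Finset.mem_insert]
      right
      exact Finset.mem_image.2 ⟨m, Finset.mem_Ico.2 ⟨hm, hsmall⟩, rfl⟩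
    · calc T.min' hTne ≤ ε₀/2 := Finset.min'_le T _ (Finset.mem_insert_self _ _)
        _ ≤ _ := hfar m hbig

end RatKey
section Dicho
open Filter Metric Set Function

lemma conj_of_finite_order (f : Circle1 ≃ₜ Circle1) (F : ℝ → ℝ)
    (hFcont : Continuous F) (hFmono : StrictMono F)
    (hFlift : ∀ x : ℝ, f ((x : ℝ) : Circle1) = ((F x : ℝ) : Circle1))
    (hF1 : ∀ x, F (x + 1) = F x + 1)
    (q : ℕ) (hq : 0 < q) (p : ℤ) (hall : ∀ x, F^[q] x = x + (p:ℝ)) :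
    ConjRotCircle f := by
  have hqR : (0:ℝ) < q := by exact_mod_cast hq
  set H : ℝ → ℝ := fun x => (∑ k ∈ Finset.range q, F^[k] x) / q with hH
  have hHm : StrictMono H := by
    intro a b hab
    have hsum : ∑ k ∈ Finset.range q, F^[k] a < ∑ k ∈ Finset.range q, F^[k] b := by
      apply Finset.sum_lt_sum
      · intro k _; exact ((hFmono.monotone).iterate k) hab.le
      · exact ⟨0, Finset.mem_range.2 hq, by simpa using hab⟩
    simp only [hH]
    gcongr
  have hHc : Continuous H :=
    (continuous_finset_sum _ fun k _ => cont_iterate hFcont k).div_const _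
  have hH1 : ∀ x, H (x + 1) = H x + 1 := by
    intro x
    simp only [hH]
    have h2 : ∀ k ∈ Finset.range q, F^[k] (x + 1) = F^[k] x + 1 :=
      fun k _ => iter_add_one hF1 k x
    rw [Finset.sum_congr rfl h2, Finset.sum_add_distrib]
    simp
    field_simp
  have hsc : ∀ x, H (F x) = H x + (p:ℝ)/q := by
    intro x
    simp only [hH]
    have h1 : ∀ k, F^[k] (F x) = F^[k+1] x := by
      intro k
      rw [← Function.iterate_succ_apply]
    have h2 : ∑ k ∈ Finset.range q, F^[k] (F x) = ∑ k ∈ Finset.range q, F^[k+1] x :=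
      Finset.sum_congr rfl (fun k _ => h1 k)
    have h3 : ∑ k ∈ Finset.range q, F^[k+1] x
        = (∑ k ∈ Finset.range q, F^[k] x) + F^[q] x - F^[0] x := by
      have := Finset.sum_range_succ' (fun k => F^[k] x) q
      have h4 := Finset.sum_range_succ (fun k => F^[k] x) q
      -- sum_range_succ' : ∑_{range (q+1)} f = ∑_{range q} f (k+1) + f 0
      linarith [this, h4]
    rw [h2, h3, hall x]
    simp only [Function.iterate_zero_apply]
    field_simp
    ring
  exact conjRot_of_semiconj f F hFlift H hHc hHm hH1 ((p:ℝ)/q) hsc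

end Dicho
section Dicho2
open Filter Metric Set Function CircleDeg1Lift

lemma dichotomy (f : Circle1 ≃ₜ Circle1) (F : ℝ → ℝ)
    (hFcont : Continuous F) (hFmono : StrictMono F)
    (hFlift : ∀ x : ℝ, f ((x : ℝ) : Circle1) = ((F x : ℝ) : Circle1)) :
    ConjRotCircle f ∨
      ∃ c : Circle1, ∃ δ : ℝ, 0 < δ ∧ ∀ m : ℕ, 1 ≤ m → δ ≤ dist ((⇑f)^[m] c) c := by
  have hF1 := lift_add_one f F hFcont hFmono hFlift
  have hIt := lift_iterate f F hFlift
  set Ffd : CircleDeg1Lift := ⟨⟨F, hFmono.monotone⟩, hF1⟩ with hFfd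
  have hcoe : ⇑Ffd = F := rfl
  have hcoepow : ∀ m : ℕ, ⇑(Ffd ^ m) = F^[m] := by
    intro m
    rw [CircleDeg1Lift.coe_pow]
    rfl
  have hFbij : Function.Bijective F := ⟨hFmono.injective, surj_of_deg_one hFcont hF1⟩
  have hFunit : IsUnit Ffd := CircleDeg1Lift.isUnit_iff_bijective.2 hFbij
  set τ₀ := Ffd.translationNumber with hτdef
  have hτ_of : ∀ (m : ℕ) (k : ℤ) (x : ℝ), 1 ≤ m → F^[m] x = x + k → τ₀ = (k : ℝ)/m := by
    intro m k x hm hfix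
    have h1 : (Ffd ^ m) x = x + k := by
      have e := congrFun (hcoepow m) x
      rw [e]
      exact hfix
    exact Ffd.translationNumber_of_map_pow_eq_add_int h1 hm
  by_cases hirr : Irrational τ₀
  · have hTunit : IsUnit
        ((CircleDeg1Lift.translate (Multiplicative.ofAdd τ₀) : CircleDeg1Liftˣ) : CircleDeg1Lift) :=
      Units.isUnit _
    obtain ⟨H, hH⟩ := CircleDeg1Lift.semiconj_of_isUnit_of_translationNumber_eq hFunit hTunit
      (by rw [CircleDeg1Lift.translationNumber_translate])
    have hsc : ∀ x, H (F x) = τ₀ + H x := by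
      intro x
      have := hH x
      rw [hcoe] at this
      simpa using this
    have hHm : Monotone ⇑H := H.monotone
    have hH1 : ∀ x : ℝ, H (x + 1) = H x + 1 := fun x => H.map_add_one x
    by_cases hflat : ∃ u v : ℝ, u < v ∧ H u = H v
    · right
      obtain ⟨u, v, huv, he⟩ := hflat
      have hscm : ∀ (m : ℕ) (x : ℝ), H (F^[m] x) = m * τ₀ + H x := by
        intro m
        induction m with
        | zero => intro x; simp
        | succ m ih =>
          intro x
          rw [Function.iterate_succ_apply', hsc, ih]
          push_cast
          ring
      exact key_of_flat f F hIt H hHm hH1 τ₀ hirr hscm u v huv he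
    · left
      push_neg at hflat
      have hstrict : StrictMono ⇑H := fun a b hab =>
        lt_of_le_of_ne (hHm hab.le) (hflat a b hab)
      have hnp : ∀ (m : ℕ) (k : ℤ) (x : ℝ), 1 ≤ m → F^[m] x ≠ x + k := by
        intro m k x hm hfix
        have h1 := hτ_of m k x hm hfix
        have hmR : (0:ℝ) < m := by exact_mod_cast hm
        exact hirr ⟨(k:ℚ)/(m:ℚ), by push_cast; rw [h1]⟩
      have hHc : Continuous ⇑H := cont_of_nonflat hFcont hFmono hF1 hHm hH1 (α := τ₀) hsc hnp
      have hsc' : ∀ x, H (F x) = H x + τ₀ := fun x => by rw [hsc]; ring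
      exact conjRot_of_semiconj f F hFlift H hHc hstrict hH1 τ₀ hsc'
  · rw [Irrational] at hirr
    obtain ⟨r, hr⟩ := not_not.1 hirr
    set q := r.den with hqdef
    set p := r.num with hpdef
    have hq : 0 < q := r.pos
    have hτpq : τ₀ = (p : ℝ)/(q:ℝ) := by
      rw [← hr, Rat.cast_def]
    have hcontF : Continuous ⇑Ffd := by rw [hcoe]; exact hFcont
    obtain ⟨x₀, hx₀⟩ := (Ffd.translationNumber_eq_rat_iff hcontF hq).1 hτpq
    have hx₀' : F^[q] x₀ = x₀ + (p:ℝ) := by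
      have e := congrFun (hcoepow q) x₀
      rw [← e]
      exact hx₀
    have hper : ∀ (m : ℕ) (k : ℤ) (x : ℝ), 1 ≤ m → F^[m] x = x + k → q ∣ m := by
      intro m k x hm hfix
      have h1 := hτ_of m k x hm hfix
      have hQ : r = (k : ℚ) / (m : ℚ) := by
        apply (Rat.cast_injective (α := ℝ))
        push_cast
        rw [hr, h1]
      have hQ2 : r = Rat.divInt k m := by
        rw [Rat.divInt_eq_div, hQ]
        push_cast
        ring
      have hdvd : ((Rat.divInt k (m:ℤ)).den : ℤ) ∣ (m : ℤ) := Rat.den_dvd k m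
      rw [← hQ2] at hdvd
      exact_mod_cast hdvd
    by_cases hall : ∀ x : ℝ, F^[q] x = x + (p:ℝ)
    · left
      exact conj_of_finite_order f F hFcont hFmono hFlift hF1 q hq p hall
    · right
      push_neg at hall
      obtain ⟨y, hy⟩ := hall
      exact key_of_rational f F hFcont hFmono hF1 hIt q hq p hper x₀ hx₀' y hy

end Dicho2

/-- **Theorem (polynomial entropy of circle homeomorphisms).**
If `f` is an orientation-preserving homeomorphism of the circle (i.e. a homeomorphism
admitting a continuous strictly increasing lift `F : ℝ → ℝ`), then `h_pol(f) ∈ {0,1}`,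
and `h_pol(f) = 0` iff `f` is conjugate to a rotation. -/
theorem hpol_circle_homeo (f : Circle1 ≃ₜ Circle1)
    (F : ℝ → ℝ) (hFcont : Continuous F) (hFmono : StrictMono F)
    (hFlift : ∀ x : ℝ, f ((x : ℝ) : Circle1) = ((F x : ℝ) : Circle1)) :
    hpol (⇑f) ∈ ({0, 1} : Set EReal) ∧ (hpol (⇑f) = 0 ↔ ConjRotCircle f) := by
  have hF1 := lift_add_one f F hFcont hFmono hFlift
  have hIt := lift_iterate f F hFlift
  obtain ⟨G, hGc, hGm, hGlift⟩ := symm_lift f F hFcont hFmono hFlift hF1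
  rcases dichotomy f.symm G hGc hGm hGlift with hconj | hkey
  · have h0 := hpol_eq_zero_of_conj (conjRot_symm hconj)
    exact ⟨by rw [h0]; exact Set.mem_insert _ _,
      ⟨fun _ => conjRot_symm hconj, fun _ => h0⟩⟩
  · have h1 := hpol_eq_one_of_key hFcont hFmono hF1 hIt hkey
    refine ⟨by rw [h1]; exact Set.mem_insert_iff.2 (Or.inr rfl), ⟨?_, fun hc => hpol_eq_zero_of_conj hc⟩⟩
    intro h0
    rw [h0] at h1
    exact absurd h1 (by norm_num)
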